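/- Let α ∈ (0,1], let C > 0 and ρ > 0, let k ≥ 2 be an integer, and let a_1, …, a_{k−1} be complex numbers with |a_j| ≤ C·ρ^{j}·j^{α−1} for every 1 ≤ j ≤ k−1. Then |Σ_{j=1}^{k−1} a_j a_{k−j}| ≤ C²·ρ^{k}·k^{2α−1}·B(α,α). -/

import Mathlib

open MeasureTheory Finset

/-- The Euler Beta function `B(a,b) = ∫₀¹ u^(a-1) (1-u)^(b-1) du`. -/
noncomputable def Beta (a b : ℝ) : ℝ :=
  ∫ u in Set.Ioo (0:ℝ) 1, u ^ (a - 1) * (1 - u) ^ (b - 1)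

open Set Real in
private lemma beta_int (α : ℝ) (hα : 0 < α) (hα1 : α ≤ 1) {K : ℝ} (hK : 0 < K) :
    IntegrableOn (fun t : ℝ => (t * (K - t)) ^ (α - 1)) (Set.Ioc 0 K) := by
  have hm : Measurable fun t : ℝ => (t * (K - t)) ^ (α - 1) := by fun_prop
  rw [integrableOn_Ioc_iff_integrableOn_Ioo]
  have hsplit : Set.Ioo (0:ℝ) K = Set.Ioc 0 (K/2) ∪ Set.Ioo (K/2) K := by
    rw [Set.Ioc_union_Ioo_eq_Ioo (by linarith) (by linarith)]
  rw [hsplit]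
  apply IntegrableOn.union
  · -- on (0, K/2]
    have hg : IntegrableOn (fun t : ℝ => (K/2) ^ (α-1) * t ^ (α - 1)) (Set.Ioc 0 (K/2)) := by
      have := intervalIntegral.intervalIntegrable_rpow' (a := 0) (b := K/2)
        (r := α - 1) (by linarith)
      exact ((intervalIntegrable_iff_integrableOn_Ioc_of_le (by linarith)).mp this).const_mul _
    refine Integrable.mono hg (hm.aestronglyMeasurable.restrict) ?_
    refine (ae_restrict_iff' measurableSet_Ioc).mpr (Filter.Eventually.of_forall ?_)
    intro t ht
    have h1 : 0 < t := ht.1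
    have h2 : t ≤ K/2 := ht.2
    have hb : (0:ℝ) < t * (K/2) := by nlinarith
    have hle : t * (K/2) ≤ t * (K - t) := by nlinarith
    have key : (t * (K - t)) ^ (α - 1) ≤ (t * (K/2)) ^ (α-1) :=
      Real.rpow_le_rpow_of_nonpos hb hle (by linarith)
    rw [Real.norm_eq_abs, Real.norm_eq_abs, abs_of_nonneg (Real.rpow_nonneg (by nlinarith) _),
      abs_of_nonneg (mul_nonneg (Real.rpow_nonneg (by linarith) _) (Real.rpow_nonneg h1.le _))]
    calc (t * (K - t)) ^ (α - 1) ≤ (t * (K/2)) ^ (α-1) := key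
      _ = (K/2) ^ (α-1) * t ^ (α-1) := by
          rw [Real.mul_rpow h1.le (by linarith), mul_comm]
  · -- on (K/2, K)
    have hg : IntegrableOn (fun t : ℝ => (K/2) ^ (α-1) * (K - t) ^ (α - 1)) (Set.Ioo (K/2) K) := by
      have h0 : IntervalIntegrable (fun s : ℝ => s ^ (α - 1)) volume 0 (K/2) :=
        intervalIntegral.intervalIntegrable_rpow' (by linarith)
      have h1 := (h0.comp_sub_left K).symm
      simp only [sub_zero] at h1
      rw [show K - K/2 = K/2 by ring] at h1
      have h2 : IntegrableOn (fun t : ℝ => (K - t) ^ (α - 1)) (Set.Ioc (K/2) K) :=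
        (intervalIntegrable_iff_integrableOn_Ioc_of_le (by linarith)).mp h1
      exact ((h2.mono_set Set.Ioo_subset_Ioc_self)).const_mul _
    refine Integrable.mono hg (hm.aestronglyMeasurable.restrict) ?_
    refine (ae_restrict_iff' measurableSet_Ioo).mpr (Filter.Eventually.of_forall ?_)
    intro t ht
    have h1 : K/2 < t := ht.1
    have h2 : t < K := ht.2
    have hb : (0:ℝ) < (K/2) * (K - t) := by nlinarith
    have hle : (K/2) * (K - t) ≤ t * (K - t) := by nlinarith
    have key : (t * (K - t)) ^ (α - 1) ≤ ((K/2) * (K - t)) ^ (α-1) :=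
      Real.rpow_le_rpow_of_nonpos hb hle (by linarith)
    rw [Real.norm_eq_abs, Real.norm_eq_abs, abs_of_nonneg (Real.rpow_nonneg (by nlinarith) _),
      abs_of_nonneg (mul_nonneg (Real.rpow_nonneg (by linarith) _) (Real.rpow_nonneg (by linarith) _))]
    calc (t * (K - t)) ^ (α - 1) ≤ ((K/2) * (K - t)) ^ (α-1) := key
      _ = (K/2) ^ (α-1) * (K - t) ^ (α-1) := Real.mul_rpow (by linarith) (by linarith)

open Set Real in
private lemma beta_cov (α : ℝ) {K : ℝ} (hK : 0 < K) :
    ∫ t in Set.Ioc (0:ℝ) K, (t * (K - t)) ^ (α - 1) = K ^ (2*α - 1) * Beta α α := by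
  have h1 : (K • ∫ x in (0:ℝ)..1, ((K * x) * (K - K * x)) ^ (α - 1))
      = ∫ t in (0:ℝ)..K, (t * (K - t)) ^ (α - 1) := by
    have := intervalIntegral.smul_integral_comp_mul_left
      (f := fun t : ℝ => (t * (K - t)) ^ (α - 1)) (a := 0) (b := 1) K
    simpa using this
  have h2 : ∫ x in (0:ℝ)..1, ((K * x) * (K - K * x)) ^ (α - 1)
      = (K^2) ^ (α - 1) * ∫ x in (0:ℝ)..1, x ^ (α - 1) * (1 - x) ^ (α - 1) := by
    rw [← intervalIntegral.integral_const_mul]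
    apply intervalIntegral.integral_congr
    intro x hx
    rw [Set.uIcc_of_le (by norm_num : (0:ℝ) ≤ 1)] at hx
    have hx0 : 0 ≤ x := hx.1
    have hx1 : 0 ≤ 1 - x := by linarith [hx.2]
    have e1 : (K * x) * (K - K * x) = K^2 * (x * (1 - x)) := by ring
    simp only []
    rw [e1, Real.mul_rpow (by positivity) (mul_nonneg hx0 hx1), Real.mul_rpow hx0 hx1]
  have h3 : ∫ x in (0:ℝ)..1, x ^ (α - 1) * (1 - x) ^ (α - 1) = Beta α α := by
    rw [intervalIntegral.integral_of_le (by norm_num : (0:ℝ) ≤ 1),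
      MeasureTheory.integral_Ioc_eq_integral_Ioo]
    rfl
  have h4 : ∫ t in Set.Ioc (0:ℝ) K, (t * (K - t)) ^ (α - 1)
      = ∫ t in (0:ℝ)..K, (t * (K - t)) ^ (α - 1) :=
    (intervalIntegral.integral_of_le hK.le).symm
  rw [h4, ← h1, h2, h3, smul_eq_mul]
  rw [show (K:ℝ)^2 = K ^ ((2:ℕ):ℝ) by rw [Real.rpow_natCast], ← Real.rpow_mul hK.le]
  push_cast
  rw [← mul_assoc, show K * K ^ (2*(α-1)) = K ^ (2*α - 1) by
    rw [show (2:ℝ)*α-1 = 1 + 2*(α-1) by ring, Real.rpow_add hK, Real.rpow_one]]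

theorem stmt_9 (α : ℝ) (hα : 0 < α) (hα1 : α ≤ 1)
    (C ρ : ℝ) (hC : 0 < C) (hρ : 0 < ρ)
    (k : ℕ) (hk : 2 ≤ k)
    (a : ℕ → ℂ)
    (hbound : ∀ j : ℕ, 1 ≤ j → j ≤ k - 1 → ‖a j‖ ≤ C * ρ ^ j * (j:ℝ) ^ (α - 1)) :
    ‖∑ j ∈ Finset.Ico 1 k, a j * a (k - j)‖ ≤
      C ^ 2 * ρ ^ k * (k:ℝ) ^ (2*α - 1) * Beta α α := by
  set K : ℝ := (k : ℝ) with hKdef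
  have hK2 : (2:ℝ) ≤ K := by rw [hKdef]; exact_mod_cast hk
  have hK0 : (0:ℝ) < K := by linarith
  set h : ℝ → ℝ := fun t => (t * (K - t)) ^ (α - 1) with hhdef
  -- interval centers
  set c : ℕ → ℝ := fun j => if 2*j ≤ k then (j:ℝ) - 1 else (j:ℝ) with hcdef
  set I : ℕ → Set ℝ := fun j => Set.Ioo (c j) (c j + 1) with hIdef
  have hIsub : ∀ j ∈ Finset.Ico 1 k, I j ⊆ Set.Ioc 0 K := by
    intro j hj
    rw [Finset.mem_Ico] at hj
    have hj1 : (1:ℝ) ≤ (j:ℝ) := by exact_mod_cast hj.1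
    have hjk : (j:ℝ) + 1 ≤ K := by rw [hKdef]; exact_mod_cast hj.2
    intro x hx
    simp only [hIdef, hcdef, Set.mem_Ioo] at hx
    split_ifs at hx with hcase
    · exact ⟨by linarith [hx.1], by linarith [hx.2]⟩
    · exact ⟨by linarith [hx.1], by linarith [hx.2]⟩
  have hIint : ∀ j ∈ Finset.Ico 1 k, IntegrableOn h (I j) :=
    fun j hj => (beta_int α hα hα1 hK0).mono_set (hIsub j hj)
  -- pointwise lower bound on each interval
  have hmono : ∀ j ∈ Finset.Ico 1 k, ∀ t ∈ I j, h (j:ℝ) ≤ h t := by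
    intro j hj t ht
    rw [Finset.mem_Ico] at hj
    have hj1 : (1:ℝ) ≤ (j:ℝ) := by exact_mod_cast hj.1
    have hjk : (j:ℝ) + 1 ≤ K := by rw [hKdef]; exact_mod_cast hj.2
    simp only [hIdef, hcdef, Set.mem_Ioo] at ht
    split_ifs at ht with hcase
    · -- 2j ≤ k : decreasing part, t ∈ (j-1, j)
      have h2j : 2*(j:ℝ) ≤ K := by rw [hKdef]; exact_mod_cast hcase
      have ht0 : 0 < t := by linarith [ht.1]
      have htj : t < (j:ℝ) := by linarith [ht.2]
      have hb : (0:ℝ) < t * (K - t) := by nlinarith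
      have hle : t * (K - t) ≤ (j:ℝ) * (K - (j:ℝ)) := by nlinarith
      exact Real.rpow_le_rpow_of_nonpos hb hle (by linarith)
    · -- 2j > k : increasing part, t ∈ (j, j+1)
      have h2j : K < 2*(j:ℝ) := by
        have : k < 2*j := by omega
        rw [hKdef]; exact_mod_cast this
      have ht0 : (j:ℝ) < t := ht.1
      have htK : t < K := by linarith [ht.2]
      have hb : (0:ℝ) < t * (K - t) := by nlinarith
      have hle : t * (K - t) ≤ (j:ℝ) * (K - (j:ℝ)) := by nlinarith
      exact Real.rpow_le_rpow_of_nonpos hb hle (by linarith)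
  -- each term bounded by integral over I j
  have hterm : ∀ j ∈ Finset.Ico 1 k, h (j:ℝ) ≤ ∫ t in I j, h t := by
    intro j hj
    have hvol : (volume (I j)).toReal = 1 := by
      simp [hIdef, Real.volume_Ioo]
    have e : h (j:ℝ) = ∫ _t in I j, h (j:ℝ) := by
      rw [setIntegral_const, measureReal_def, hvol, one_smul]
    rw [e]
    refine setIntegral_mono_on ?_ (hIint j hj) measurableSet_Ioo (hmono j hj)
    exact integrableOn_const (by simp [hIdef, Real.volume_Ioo])
  -- disjointness
  have hkey : ∀ i ∈ Finset.Ico 1 k, ∀ j ∈ Finset.Ico 1 k, i < j → c i + 1 ≤ c j := by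
    intro i hi j hj hij
    rw [Finset.mem_Ico] at hi hj
    have hcast : (i:ℝ) + 1 ≤ (j:ℝ) := by exact_mod_cast hij
    simp only [hcdef]
    split_ifs with h1 h2 h2
    · have : i + 1 ≤ j := hij
      have : (i:ℝ) ≤ (j:ℝ) - 1 := by linarith
      linarith
    · linarith
    · exfalso; omega
    · linarith
  have hdisj : Set.Pairwise ↑(Finset.Ico 1 k) (Function.onFun Disjoint I) := by
    intro i hi j hj hij
    rw [Finset.mem_coe] at hi hj
    rcases hij.lt_or_gt with hlt | hlt
    · have := hkey i hi j hj hlt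
      exact Set.disjoint_left.mpr (fun x hx hx' => by
        simp only [hIdef, Set.mem_Ioo] at hx hx'; linarith [hx.2, hx'.1])
    · have := hkey j hj i hi hlt
      exact Set.disjoint_left.mpr (fun x hx hx' => by
        simp only [hIdef, Set.mem_Ioo] at hx hx'; linarith [hx.1, hx'.2])
  -- sum of integrals = integral over union ≤ integral over Ioc 0 K
  have hsum_int : ∑ j ∈ Finset.Ico 1 k, ∫ t in I j, h t ≤ ∫ t in Set.Ioc 0 K, h t := by
    rw [← MeasureTheory.integral_biUnion_finset (Finset.Ico 1 k)
      (fun i _ => measurableSet_Ioo) hdisj hIint]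
    apply setIntegral_mono_set (beta_int α hα hα1 hK0)
    · refine (ae_restrict_iff' measurableSet_Ioc).mpr (Filter.Eventually.of_forall ?_)
      intro t ht
      exact Real.rpow_nonneg (mul_nonneg ht.1.le (by linarith [ht.2])) _
    · exact HasSubset.Subset.eventuallyLE (Set.iUnion₂_subset hIsub)
  have hS : ∑ j ∈ Finset.Ico 1 k, h (j:ℝ) ≤ K ^ (2*α - 1) * Beta α α := by
    calc ∑ j ∈ Finset.Ico 1 k, h (j:ℝ) ≤ ∑ j ∈ Finset.Ico 1 k, ∫ t in I j, h t :=
          Finset.sum_le_sum hterm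
      _ ≤ ∫ t in Set.Ioc 0 K, h t := hsum_int
      _ = K ^ (2*α - 1) * Beta α α := beta_cov α hK0
  -- step 1: bound the complex sum
  have hstep1 : ∀ j ∈ Finset.Ico 1 k, ‖a j * a (k - j)‖ ≤ C^2 * ρ^k * h (j:ℝ) := by
    intro j hj
    rw [Finset.mem_Ico] at hj
    have hj1 := hj.1
    have hjk := hj.2
    have b1 := hbound j hj1 (by omega)
    have b2 := hbound (k - j) (by omega) (by omega)
    have hcast : ((k - j : ℕ) : ℝ) = K - (j:ℝ) := by
      rw [hKdef]; push_cast [Nat.cast_sub hjk.le]; ring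
    have hjR : (0:ℝ) < (j:ℝ) := by exact_mod_cast hj1
    have hKj : (0:ℝ) ≤ K - (j:ℝ) := by
      have : (j:ℝ) ≤ K := by rw [hKdef]; exact_mod_cast hjk.le
      linarith
    calc ‖a j * a (k - j)‖ = ‖a j‖ * ‖a (k - j)‖ := norm_mul _ _
      _ ≤ (C * ρ ^ j * (j:ℝ) ^ (α - 1)) * (C * ρ ^ (k-j) * ((k-j : ℕ):ℝ) ^ (α - 1)) := by
          apply mul_le_mul b1 b2 (norm_nonneg _)
          positivity
      _ = C^2 * (ρ^j * ρ^(k-j)) * ((j:ℝ) ^ (α - 1) * (K - (j:ℝ)) ^ (α - 1)) := by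
          rw [hcast]; ring
      _ = C^2 * ρ^k * h (j:ℝ) := by
          rw [← pow_add, show j + (k - j) = k by omega, hhdef]
          rw [← Real.mul_rpow hjR.le hKj]
  calc ‖∑ j ∈ Finset.Ico 1 k, a j * a (k - j)‖
      ≤ ∑ j ∈ Finset.Ico 1 k, ‖a j * a (k - j)‖ := norm_sum_le _ _
    _ ≤ ∑ j ∈ Finset.Ico 1 k, C^2 * ρ^k * h (j:ℝ) := Finset.sum_le_sum hstep1
    _ = C^2 * ρ^k * ∑ j ∈ Finset.Ico 1 k, h (j:ℝ) := by rw [← Finset.mul_sum]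
    _ ≤ C^2 * ρ^k * (K ^ (2*α - 1) * Beta α α) := by
        apply mul_le_mul_of_nonneg_left hS (by positivity)
    _ = C ^ 2 * ρ ^ k * K ^ (2*α - 1) * Beta α α := by ring
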